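/- The trailing T×T block principal submatrix inequality 𝐂_{T+1}^{[2:T+1, 2:T+1]} ⪯ 𝐂_T^{[1:T, 1:T]} holds, i.e., the clairvoyant baseline shift matrix Δ_f restricted to its trailing block is negative semidefinite. (Claim established in the proof of Theorem 1.) -/

import Mathlib

open Matrix

noncomputable section

/-- Index type for stacked state / disturbance trajectories over horizon `T`:
block index in `Fin (T+1)`, coordinate in `Fin n`. -/
abbrev SIdx (n T : ℕ) := Fin (T + 1) × Fin n

/-- Index type for stacked input trajectories over horizon `T`. -/
abbrev UIdx (m T : ℕ) := Fin T × Fin m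

/-- The block-downshift operator `𝐙`. -/
def Zshift (n T : ℕ) : Matrix (SIdx n T) (SIdx n T) ℝ :=
  Matrix.of fun p q => if (p.1 : ℕ) = (q.1 : ℕ) + 1 ∧ p.2 = q.2 then (1 : ℝ) else 0

/-- `𝐀 = I_{T+1} ⊗ A`. -/
def bigA (n T : ℕ) (A : Matrix (Fin n) (Fin n) ℝ) : Matrix (SIdx n T) (SIdx n T) ℝ :=
  Matrix.of fun p q => if p.1 = q.1 then A p.2 q.2 else 0

/-- `𝐁 = col(I_T ⊗ B, 0)`. -/
def bigB (n m T : ℕ) (B : Matrix (Fin n) (Fin m) ℝ) : Matrix (SIdx n T) (UIdx m T) ℝ :=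
  Matrix.of fun p q => if (p.1 : ℕ) = (q.1 : ℕ) then B p.2 q.2 else 0

/-- `𝐐 = blkdiag(I_T ⊗ Q, 0)`. -/
def bigQ (n T : ℕ) (Q : Matrix (Fin n) (Fin n) ℝ) : Matrix (SIdx n T) (SIdx n T) ℝ :=
  Matrix.of fun p q => if p.1 = q.1 ∧ (p.1 : ℕ) < T then Q p.2 q.2 else 0

/-- `𝐑 = I_T ⊗ R`. -/
def bigR (m T : ℕ) (R : Matrix (Fin m) (Fin m) ℝ) : Matrix (UIdx m T) (UIdx m T) ℝ :=
  Matrix.of fun p q => if p.1 = q.1 then R p.2 q.2 else 0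

/-- `𝐅 = (I − 𝐙𝐀)⁻¹𝐙𝐁`. -/
def bigF (n m T : ℕ) (A : Matrix (Fin n) (Fin n) ℝ) (B : Matrix (Fin n) (Fin m) ℝ) :
    Matrix (SIdx n T) (UIdx m T) ℝ :=
  (1 - Zshift n T * bigA n T A)⁻¹ * (Zshift n T * bigB n m T B)

/-- `𝐆 = (I − 𝐙𝐀)⁻¹`. -/
def bigG (n T : ℕ) (A : Matrix (Fin n) (Fin n) ℝ) : Matrix (SIdx n T) (SIdx n T) ℝ :=
  (1 - Zshift n T * bigA n T A)⁻¹

/-- The control cost `J_T(u, δ) = xᵀ𝐐x + uᵀ𝐑u` with `x = 𝐅u + 𝐆δ`. -/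
def costJ (n m T : ℕ) (A : Matrix (Fin n) (Fin n) ℝ) (B : Matrix (Fin n) (Fin m) ℝ)
    (Q : Matrix (Fin n) (Fin n) ℝ) (R : Matrix (Fin m) (Fin m) ℝ)
    (u : UIdx m T → ℝ) (δ : SIdx n T → ℝ) : ℝ :=
  let x := bigF n m T A B *ᵥ u + bigG n T A *ᵥ δ
  x ⬝ᵥ (bigQ n T Q *ᵥ x) + u ⬝ᵥ (bigR m T R *ᵥ u)

/-- `𝐏 = 𝐑 + 𝐅ᵀ𝐐𝐅`. -/
def bigP (n m T : ℕ) (A : Matrix (Fin n) (Fin n) ℝ) (B : Matrix (Fin n) (Fin m) ℝ)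
    (Q : Matrix (Fin n) (Fin n) ℝ) (R : Matrix (Fin m) (Fin m) ℝ) :
    Matrix (UIdx m T) (UIdx m T) ℝ :=
  bigR m T R + (bigF n m T A B)ᵀ * bigQ n T Q * bigF n m T A B

/-- The clairvoyant cost matrix `𝐂_T = 𝐆ᵀ𝐐(I + 𝐅𝐑⁻¹𝐅ᵀ𝐐)⁻¹𝐆`. -/
def Cmat (n m T : ℕ) (A : Matrix (Fin n) (Fin n) ℝ) (B : Matrix (Fin n) (Fin m) ℝ)
    (Q : Matrix (Fin n) (Fin n) ℝ) (R : Matrix (Fin m) (Fin m) ℝ) :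
    Matrix (SIdx n T) (SIdx n T) ℝ :=
  (bigG n T A)ᵀ * bigQ n T Q *
    (1 + bigF n m T A B * (bigR m T R)⁻¹ * (bigF n m T A B)ᵀ * bigQ n T Q)⁻¹ * bigG n T A

/-- Assemble `δ = col(x₀, w₀, …, w_{T−1})`. -/
def assemble (n T : ℕ) (x0 : Fin n → ℝ) (w : Fin T × Fin n → ℝ) : SIdx n T → ℝ :=
  fun p => if h : (p.1 : ℕ) = 0 then x0 p.2
    else w (⟨(p.1 : ℕ) - 1, by have := p.1.isLt; omega⟩, p.2)

namespace Stmt13Aux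
open Matrix

variable {ι : Type*} [Fintype ι] [DecidableEq ι]

/-- Generic block-shift/embedding 0-1 matrix: entry 1 iff row block = col block + off. -/
def dmat (ι : Type*) [DecidableEq ι] (k l off : ℕ) : Matrix (Fin k × ι) (Fin l × ι) ℝ :=
  Matrix.of fun p q => if (p.1 : ℕ) = (q.1 : ℕ) + off ∧ p.2 = q.2 then (1 : ℝ) else 0

lemma dmat_mul_apply {k l off : ℕ} {α : Type*} [Fintype α]
    (M : Matrix (Fin l × ι) α ℝ) (p : Fin k × ι) (a : α) :
    (dmat ι k l off * M) p a =
      if h : off ≤ (p.1 : ℕ) ∧ (p.1 : ℕ) - off < l then M (⟨(p.1 : ℕ) - off, h.2⟩, p.2) a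
      else 0 := by
  rw [mul_apply]
  split_ifs with h
  · rw [Finset.sum_eq_single ((⟨(p.1 : ℕ) - off, h.2⟩, p.2) : Fin l × ι)]
    · simp [dmat]; intro hc; exfalso; apply hc; omega
    · rintro ⟨r1, r2⟩ - hne
      simp only [dmat, of_apply, ite_mul, one_mul, zero_mul]
      rw [if_neg]
      rintro ⟨h1, h2⟩
      apply hne
      ext
      · simp; omega
      · exact h2.symm
    · intro h; exact absurd (Finset.mem_univ _) h
  · apply Finset.sum_eq_zero
    rintro ⟨r1, r2⟩ -
    simp only [dmat, of_apply, ite_mul, one_mul, zero_mul]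
    rw [if_neg]
    rintro ⟨h1, h2⟩
    exact h ⟨by omega, by have := r1.isLt; omega⟩

lemma mul_dmat_apply {k l off : ℕ} {α : Type*} [Fintype α]
    (M : Matrix α (Fin k × ι) ℝ) (a : α) (q : Fin l × ι) :
    (M * dmat ι k l off) a q =
      if h : (q.1 : ℕ) + off < k then M a (⟨(q.1 : ℕ) + off, h⟩, q.2) else 0 := by
  rw [mul_apply]
  split_ifs with h
  · rw [Finset.sum_eq_single ((⟨(q.1 : ℕ) + off, h⟩, q.2) : Fin k × ι)]
    · simp [dmat]
    · rintro ⟨r1, r2⟩ - hne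
      simp only [dmat, of_apply, mul_ite, mul_one, mul_zero]
      rw [if_neg]
      rintro ⟨h1, h2⟩
      apply hne
      ext
      · simp; omega
      · exact h2
    · intro h; exact absurd (Finset.mem_univ _) h
  · apply Finset.sum_eq_zero
    rintro ⟨r1, r2⟩ -
    simp only [dmat, of_apply, mul_ite, mul_one, mul_zero]
    rw [if_neg]
    rintro ⟨h1, h2⟩
    exact h (by have := r1.isLt; omega)

lemma transpose_dmat_mul {k l off : ℕ} {α : Type*} [Fintype α]
    (M : Matrix (Fin k × ι) α ℝ) (q : Fin l × ι) (a : α) :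
    ((dmat ι k l off)ᵀ * M) q a =
      if h : (q.1 : ℕ) + off < k then M (⟨(q.1 : ℕ) + off, h⟩, q.2) a else 0 := by
  have : (dmat ι k l off)ᵀ * M = (Mᵀ * dmat ι k l off)ᵀ := by
    rw [transpose_mul, transpose_transpose]
  rw [this, transpose_apply, mul_dmat_apply]
  rfl

lemma Zshift_eq (n L : ℕ) : Zshift n L = dmat (Fin n) (L + 1) (L + 1) 1 := rfl

end Stmt13Aux
namespace Stmt13Aux
section Nilp
variable {ι : Type*} [Fintype ι] [DecidableEq ι]

lemma pow_lower {k : ℕ} (N : Matrix (Fin k × ι) (Fin k × ι) ℝ)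
    (hN : ∀ p q, ((p.1 : ℕ) ≤ (q.1 : ℕ)) → N p q = 0) :
    ∀ (j : ℕ) (p q : Fin k × ι), ((p.1 : ℕ) < (q.1 : ℕ) + j) → (N ^ j) p q = 0 := by
  intro j
  induction j with
  | zero =>
    intro p q h
    simp only [pow_zero]
    rw [Matrix.one_apply_ne]
    intro he; rw [he] at h; omega
  | succ j ih =>
    intro p q h
    rw [pow_succ, Matrix.mul_apply]
    apply Finset.sum_eq_zero
    intro r _
    by_cases hr : (p.1 : ℕ) < (r.1 : ℕ) + j
    · rw [ih p r hr, zero_mul]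
    · rw [hN r q (by omega), mul_zero]

lemma isUnit_one_sub_lower {k : ℕ} (N : Matrix (Fin k × ι) (Fin k × ι) ℝ)
    (hN : ∀ p q, ((p.1 : ℕ) ≤ (q.1 : ℕ)) → N p q = 0) :
    IsUnit (1 - N) := by
  apply IsNilpotent.isUnit_one_sub
  refine ⟨k, ?_⟩
  ext p q
  rw [pow_lower N hN k p q (by have := p.1.isLt; omega)]
  simp

end Nilp

section Horizon
variable {n m : ℕ} (L : ℕ) (A : Matrix (Fin n) (Fin n) ℝ)

lemma ZA_lower : ∀ p q : SIdx n L, ((p.1 : ℕ) ≤ (q.1 : ℕ)) →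
    (Zshift n L * bigA n L A) p q = 0 := by
  intro p q hpq
  rw [Zshift_eq, dmat_mul_apply]
  split_ifs with h
  · show (if _ then _ else _) = _
    rw [if_neg]
    intro he
    have := congrArg (fun z : Fin (L+1) => (z : ℕ)) he
    simp at this; omega
  · rfl

lemma isUnit_oneSubZA : IsUnit (1 - Zshift n L * bigA n L A) :=
  isUnit_one_sub_lower _ (ZA_lower L A)

lemma bigG_mul : bigG n L A * (1 - Zshift n L * bigA n L A) = 1 :=
  Matrix.nonsing_inv_mul _ ((Matrix.isUnit_iff_isUnit_det _).mp (isUnit_oneSubZA L A))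

lemma mul_bigG : (1 - Zshift n L * bigA n L A) * bigG n L A = 1 :=
  Matrix.mul_nonsing_inv _ ((Matrix.isUnit_iff_isUnit_det _).mp (isUnit_oneSubZA L A))

end Horizon
end Stmt13Aux
namespace Stmt13Aux
open Matrix
section PSD
variable {n m L : ℕ} {Q : Matrix (Fin n) (Fin n) ℝ} {R : Matrix (Fin m) (Fin m) ℝ}

lemma bigQ_quad (x : SIdx n L → ℝ) :
    x ⬝ᵥ (bigQ n L Q *ᵥ x) =
      ∑ t : Fin (L+1), (if (t : ℕ) < L then
        (fun i => x (t, i)) ⬝ᵥ (Q *ᵥ (fun j => x (t, j))) else 0) := by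
  simp only [dotProduct, mulVec, bigQ, of_apply]
  rw [Fintype.sum_prod_type]
  apply Finset.sum_congr rfl
  intro t _
  split_ifs with ht
  · simp only [dotProduct, mulVec]
    apply Finset.sum_congr rfl
    intro i _
    congr 1
    rw [Fintype.sum_prod_type]
    simp only [ite_and, ht, if_true, ite_mul, zero_mul, Finset.sum_ite_irrel,
      Finset.sum_const_zero, Finset.sum_ite_eq, Finset.mem_univ, if_true]
  · apply Finset.sum_eq_zero
    intro i _
    simp only [ht, and_false, if_false, zero_mul, Finset.sum_const_zero, mul_zero]

lemma bigR_quad (u : UIdx m L → ℝ) :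
    u ⬝ᵥ (bigR m L R *ᵥ u) =
      ∑ t : Fin L, (fun i => u (t, i)) ⬝ᵥ (R *ᵥ (fun j => u (t, j))) := by
  simp only [dotProduct, mulVec, bigR, of_apply]
  rw [Fintype.sum_prod_type]
  apply Finset.sum_congr rfl
  intro t _
  apply Finset.sum_congr rfl
  intro i _
  congr 1
  rw [Fintype.sum_prod_type]
  simp only [ite_mul, zero_mul, Finset.sum_ite_irrel,
    Finset.sum_const_zero, Finset.sum_ite_eq, Finset.mem_univ, if_true]

lemma bigQ_herm (hQ : Q.IsHermitian) : (bigQ n L Q).IsHermitian := by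
  rw [Matrix.IsHermitian, conjTranspose_eq_transpose_of_trivial]
  ext p q
  simp only [transpose_apply, bigQ, of_apply]
  have hq : ∀ i j, Q i j = Q j i := fun i j => by
    conv_lhs => rw [← hQ]
    simp [conjTranspose_apply]
  split_ifs with h1 h2 h2
  · rw [hq]
  · exfalso; apply h2; exact ⟨h1.1.symm, h1.1 ▸ h1.2⟩
  · exfalso; apply h1; exact ⟨h2.1.symm, h2.1 ▸ h2.2⟩
  · rfl

lemma bigR_herm (hR : R.IsHermitian) : (bigR m L R).IsHermitian := by
  rw [Matrix.IsHermitian, conjTranspose_eq_transpose_of_trivial]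
  ext p q
  simp only [transpose_apply, bigR, of_apply]
  have hr : ∀ i j, R i j = R j i := fun i j => by
    conv_lhs => rw [← hR]
    simp [conjTranspose_apply]
  split_ifs with h1 h2 h2
  · rw [hr]
  · exact absurd h1.symm h2
  · exact absurd h2.symm h1
  · rfl

lemma bigQ_posSemidef (hQ : Q.PosSemidef) : (bigQ n L Q).PosSemidef := by
  refine Matrix.PosSemidef.of_dotProduct_mulVec_nonneg (bigQ_herm hQ.1) fun x => ?_
  rw [star_trivial, bigQ_quad]
  apply Finset.sum_nonneg
  intro t _
  split_ifs
  · simpa using hQ.dotProduct_mulVec_nonneg (fun i => x (t, i))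
  · exact le_rfl

lemma bigR_posDef (hR : R.PosDef) : (bigR m L R).PosDef := by
  refine Matrix.PosDef.of_dotProduct_mulVec_pos (bigR_herm hR.1) fun u hu => ?_
  rw [star_trivial, bigR_quad]
  have hex : ∃ p : UIdx m L, u p ≠ 0 := by
    by_contra h
    push_neg at h
    exact hu (funext fun p => h p)
  obtain ⟨⟨t0, i0⟩, hp⟩ := hex
  apply Finset.sum_pos'
  · intro t _
    simpa using hR.posSemidef.dotProduct_mulVec_nonneg (fun i => u (t, i))
  · refine ⟨t0, Finset.mem_univ _, ?_⟩
    have : (fun i => u (t0, i)) ≠ 0 := by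
      intro h
      exact hp (congrFun h i0)
    simpa using hR.dotProduct_mulVec_pos this

end PSD
end Stmt13Aux
namespace Stmt13Aux
open Matrix

set_option maxHeartbeats 1000000

lemma isUnit_one_add_swap {A : Type*} [Ring A] (a b : A) (h : IsUnit (1 + b * a)) :
    IsUnit (1 + a * b) := by
  obtain ⟨u, hu⟩ := h
  have hc1 : (1 + b * a) * (↑u⁻¹ : A) = 1 := by rw [← hu]; exact u.mul_inv
  have hc2 : (↑u⁻¹ : A) * (1 + b * a) = 1 := by rw [← hu]; exact u.inv_mul
  set c : A := (↑u⁻¹ : A) with hc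
  refine isUnit_iff_exists.mpr ⟨1 - a * c * b, ?_, ?_⟩
  · have e : (1 + a * b) * (1 - a * c * b) = 1 + a * b - a * ((1 + b * a) * c) * b := by
      noncomm_ring
    rw [hc1] at e
    rw [e]; noncomm_ring
  · have e : (1 - a * c * b) * (1 + a * b) = 1 + a * b - a * (c * (1 + b * a)) * b := by
      noncomm_ring
    rw [hc2] at e
    rw [e]; noncomm_ring

lemma dot_tr {α β : Type*} [Fintype α] [Fintype β] (M : Matrix α β ℝ) (a : α → ℝ) (b : β → ℝ) :
    a ⬝ᵥ (M *ᵥ b) = (Mᵀ *ᵥ a) ⬝ᵥ b := by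
  rw [Matrix.dotProduct_mulVec, Matrix.mulVec_transpose]

section Horizon2
variable {n m : ℕ} (L : ℕ) (A : Matrix (Fin n) (Fin n) ℝ) (B : Matrix (Fin n) (Fin m) ℝ)
  (Q : Matrix (Fin n) (Fin n) ℝ) (R : Matrix (Fin m) (Fin m) ℝ)

lemma bigP_posDef (hQ : Q.PosSemidef) (hR : R.PosDef) : (bigP n m L A B Q R).PosDef := by
  refine (bigR_posDef hR).add_posSemidef ?_
  have h := (bigQ_posSemidef (L := L) hQ).conjTranspose_mul_mul_same (bigF n m L A B)
  rwa [conjTranspose_eq_transpose_of_trivial] at h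

lemma FRF_posSemidef (hR : R.PosDef) :
    (bigF n m L A B * (bigR m L R)⁻¹ * (bigF n m L A B)ᵀ).PosSemidef := by
  have h := ((bigR_posDef (L := L) hR).inv).posSemidef.mul_mul_conjTranspose_same (bigF n m L A B)
  rwa [conjTranspose_eq_transpose_of_trivial] at h

open scoped MatrixOrder in
lemma isUnit_bigM (hQ : Q.PosSemidef) (hR : R.PosDef) :
    IsUnit (1 + bigF n m L A B * (bigR m L R)⁻¹ * (bigF n m L A B)ᵀ * bigQ n L Q) := by
  set S := bigF n m L A B * (bigR m L R)⁻¹ * (bigF n m L A B)ᵀ with hSdef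
  have hS : S.PosSemidef := FRF_posSemidef L A B R hR
  have hQb : (bigQ n L Q).PosSemidef := bigQ_posSemidef hQ
  set W := CFC.sqrt (bigQ n L Q) with hWdef
  have hWW : W * W = bigQ n L Q := CFC.sqrt_mul_sqrt_self _ hQb.nonneg
  have hWps : W.PosSemidef := (CFC.sqrt_nonneg _).posSemidef
  have hkey : IsUnit (1 + W * (S * W)) := by
    have hpsd : (W * S * Wᴴ).PosSemidef := hS.mul_mul_conjTranspose_same W
    rw [hWps.1] at hpsd
    have hpd : (1 + W * S * W).PosDef := Matrix.PosDef.one.add_posSemidef hpsd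
    rw [← mul_assoc]
    exact hpd.isUnit
  have h := isUnit_one_add_swap (S * W) W hkey
  rwa [mul_assoc, hWW] at h

lemma QMinv (hQ : Q.PosSemidef) (hR : R.PosDef) :
    bigQ n L Q * (1 + bigF n m L A B * (bigR m L R)⁻¹ * (bigF n m L A B)ᵀ * bigQ n L Q)⁻¹ =
      bigQ n L Q - bigQ n L Q * bigF n m L A B * (bigP n m L A B Q R)⁻¹ *
        (bigF n m L A B)ᵀ * bigQ n L Q := by
  set F := bigF n m L A B with hFdef
  set Qb := bigQ n L Q with hQbdef
  set Rb := bigR m L R with hRbdef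
  set P := bigP n m L A B Q R with hPdef
  have hPd : P.PosDef := bigP_posDef L A B Q R hQ hR
  have hPP : P⁻¹ * P = 1 :=
    Matrix.nonsing_inv_mul _ ((Matrix.isUnit_iff_isUnit_det _).mp hPd.isUnit)
  have hRR : Rb * Rb⁻¹ = 1 :=
    Matrix.mul_nonsing_inv _ ((Matrix.isUnit_iff_isUnit_det _).mp (bigR_posDef hR).isUnit)
  have hFQF : Fᵀ * Qb * F = P - Rb := by
    have hP' : P = Rb + Fᵀ * Qb * F := rfl
    rw [hP', add_sub_cancel_left]
  have hP' : P = Rb + Fᵀ * Qb * F := rfl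
  have inner : Fᵀ * Qb * (1 + F * Rb⁻¹ * Fᵀ * Qb)
      = (Rb + Fᵀ * Qb * F) * (Rb⁻¹ * (Fᵀ * Qb)) := by
    rw [Matrix.add_mul, ← Matrix.mul_assoc Rb, hRR, Matrix.one_mul, Matrix.mul_add,
      Matrix.mul_one]
    simp only [Matrix.mul_assoc]
  have hXY : Qb * F * P⁻¹ * Fᵀ * Qb * (1 + F * Rb⁻¹ * Fᵀ * Qb)
      = Qb * (F * Rb⁻¹ * Fᵀ * Qb) := by
    calc Qb * F * P⁻¹ * Fᵀ * Qb * (1 + F * Rb⁻¹ * Fᵀ * Qb)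
        = Qb * (F * (P⁻¹ * (Fᵀ * Qb * (1 + F * Rb⁻¹ * Fᵀ * Qb)))) := by
          simp only [Matrix.mul_assoc]
      _ = Qb * (F * (P⁻¹ * (P * (Rb⁻¹ * (Fᵀ * Qb))))) := by
          rw [inner, ← hP']
      _ = Qb * (F * ((P⁻¹ * P) * (Rb⁻¹ * (Fᵀ * Qb)))) := by
          rw [Matrix.mul_assoc P⁻¹ P]
      _ = Qb * (F * Rb⁻¹ * Fᵀ * Qb) := by
          rw [hPP, Matrix.one_mul]; simp only [Matrix.mul_assoc]
  have main : (Qb - Qb * F * P⁻¹ * Fᵀ * Qb) * (1 + F * Rb⁻¹ * Fᵀ * Qb) = Qb := by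
    rw [sub_mul, hXY, mul_add, mul_one, add_sub_cancel_right]
  have hMinv : (1 + F * Rb⁻¹ * Fᵀ * Qb) * (1 + F * Rb⁻¹ * Fᵀ * Qb)⁻¹ = 1 :=
    Matrix.mul_nonsing_inv _
      ((Matrix.isUnit_iff_isUnit_det _).mp (isUnit_bigM L A B Q R hQ hR))
  calc Qb * (1 + F * Rb⁻¹ * Fᵀ * Qb)⁻¹
      = ((Qb - Qb * F * P⁻¹ * Fᵀ * Qb) * (1 + F * Rb⁻¹ * Fᵀ * Qb)) *
          (1 + F * Rb⁻¹ * Fᵀ * Qb)⁻¹ := by rw [main]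
    _ = (Qb - Qb * F * P⁻¹ * Fᵀ * Qb) *
          ((1 + F * Rb⁻¹ * Fᵀ * Qb) * (1 + F * Rb⁻¹ * Fᵀ * Qb)⁻¹) := by rw [mul_assoc]
    _ = Qb - Qb * F * P⁻¹ * Fᵀ * Qb := by rw [hMinv, mul_one]

lemma Cmat_eq (hQ : Q.PosSemidef) (hR : R.PosDef) :
    Cmat n m L A B Q R = (bigG n L A)ᵀ *
      (bigQ n L Q - bigQ n L Q * bigF n m L A B * (bigP n m L A B Q R)⁻¹ *
        (bigF n m L A B)ᵀ * bigQ n L Q) * bigG n L A := by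
  rw [Cmat, mul_assoc (bigG n L A)ᵀ (bigQ n L Q), QMinv L A B Q R hQ hR]

end Horizon2
end Stmt13Aux
namespace Stmt13Aux
set_option maxHeartbeats 1600000
open Matrix

section Horizon3
variable {n m : ℕ} (L : ℕ) (A : Matrix (Fin n) (Fin n) ℝ) (B : Matrix (Fin n) (Fin m) ℝ)
  (Q : Matrix (Fin n) (Fin n) ℝ) (R : Matrix (Fin m) (Fin m) ℝ)

lemma bigQ_transpose (hQ : Q.IsHermitian) : (bigQ n L Q)ᵀ = bigQ n L Q := by
  have := bigQ_herm (L := L) hQ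
  rwa [Matrix.IsHermitian, conjTranspose_eq_transpose_of_trivial] at this

lemma bigR_transpose (hR : R.IsHermitian) : (bigR m L R)ᵀ = bigR m L R := by
  have := bigR_herm (L := L) hR
  rwa [Matrix.IsHermitian, conjTranspose_eq_transpose_of_trivial] at this

lemma bigP_transpose (hQ : Q.IsHermitian) (hR : R.IsHermitian) :
    (bigP n m L A B Q R)ᵀ = bigP n m L A B Q R := by
  have hP' : bigP n m L A B Q R =
      bigR m L R + (bigF n m L A B)ᵀ * bigQ n L Q * bigF n m L A B := rfl
  rw [hP', transpose_add, transpose_mul, transpose_mul, transpose_transpose,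
    bigQ_transpose L Q hQ, bigR_transpose L R hR, Matrix.mul_assoc]

lemma bigPinv_transpose (hQ : Q.IsHermitian) (hR : R.IsHermitian) :
    ((bigP n m L A B Q R)⁻¹)ᵀ = (bigP n m L A B Q R)⁻¹ := by
  rw [Matrix.transpose_nonsing_inv, bigP_transpose L A B Q R hQ hR]

lemma Cmat_herm (hQ : Q.PosSemidef) (hR : R.PosDef) : (Cmat n m L A B Q R).IsHermitian := by
  rw [Matrix.IsHermitian, conjTranspose_eq_transpose_of_trivial,
    Cmat_eq L A B Q R hQ hR]
  simp only [transpose_sub, transpose_mul, transpose_transpose,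
    bigQ_transpose L Q hQ.1, bigPinv_transpose L A B Q R hQ.1 hR.1, Matrix.mul_sub,
    Matrix.sub_mul, Matrix.mul_assoc]

lemma cost_decomp (hQ : Q.PosSemidef) (hR : R.PosDef) (u : UIdx m L → ℝ) (δ : SIdx n L → ℝ) :
    costJ n m L A B Q R u δ = δ ⬝ᵥ (Cmat n m L A B Q R *ᵥ δ) +
      (u + ((bigP n m L A B Q R)⁻¹ * (bigF n m L A B)ᵀ * bigQ n L Q * bigG n L A) *ᵥ δ) ⬝ᵥ
        (bigP n m L A B Q R *ᵥ
          (u + ((bigP n m L A B Q R)⁻¹ * (bigF n m L A B)ᵀ * bigQ n L Q * bigG n L A) *ᵥ δ)) := by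
  set F := bigF n m L A B with hFdef
  set Qb := bigQ n L Q with hQbdef
  set Rb := bigR m L R with hRbdef
  set P := bigP n m L A B Q R with hPdef
  set G := bigG n L A with hGdef
  have hQbT : Qbᵀ = Qb := bigQ_transpose L Q hQ.1
  have hPT : Pᵀ = P := bigP_transpose L A B Q R hQ.1 hR.1
  have hPdetu : IsUnit P.det :=
    (Matrix.isUnit_iff_isUnit_det _).mp (bigP_posDef L A B Q R hQ hR).isUnit
  set g : SIdx n L → ℝ := G *ᵥ δ with hg
  set z : SIdx n L → ℝ := Qb *ᵥ g with hz
  set y : UIdx m L → ℝ := Fᵀ *ᵥ z with hy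
  set c : UIdx m L → ℝ := P⁻¹ *ᵥ y with hcdef
  have hc : (P⁻¹ * Fᵀ * Qb * G) *ᵥ δ = c := by
    simp only [← Matrix.mulVec_mulVec]
    rfl
  have hPc : P *ᵥ c = y := by
    rw [hcdef, Matrix.mulVec_mulVec, Matrix.mul_nonsing_inv _ hPdetu, Matrix.one_mulVec]
  -- LHS expansion
  have lhs_eq : costJ n m L A B Q R u δ =
      (F *ᵥ u + g) ⬝ᵥ (Qb *ᵥ (F *ᵥ u + g)) + u ⬝ᵥ (Rb *ᵥ u) := rfl
  have h3 : g ⬝ᵥ (Qb *ᵥ (F *ᵥ u)) = (F *ᵥ u) ⬝ᵥ z := by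
    rw [dot_tr, hQbT, ← hz, dotProduct_comm]
  have lhs2 : costJ n m L A B Q R u δ =
      (F *ᵥ u) ⬝ᵥ (Qb *ᵥ (F *ᵥ u)) + (F *ᵥ u) ⬝ᵥ z + (F *ᵥ u) ⬝ᵥ z +
        g ⬝ᵥ z + u ⬝ᵥ (Rb *ᵥ u) := by
    rw [lhs_eq, Matrix.mulVec_add, dotProduct_add, add_dotProduct, add_dotProduct, ← hz, h3]
    ring
  -- first RHS term
  have hCv : δ ⬝ᵥ (Cmat n m L A B Q R *ᵥ δ) = g ⬝ᵥ z - y ⬝ᵥ c := by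
    rw [Cmat_eq L A B Q R hQ hR, ← hFdef, ← hQbdef, ← hPdef, ← hGdef]
    simp only [← Matrix.mulVec_mulVec]
    rw [dot_tr, transpose_transpose, ← hg]
    rw [Matrix.sub_mulVec]
    simp only [← Matrix.mulVec_mulVec]
    rw [dotProduct_sub, ← hz, ← hcdef]
    congr 1
    rw [dot_tr, hQbT, ← hz, dot_tr F z c, ← hy]
  -- second RHS term pieces
  have hP' : P = Rb + Fᵀ * Qb * F := rfl
  have hPu : u ⬝ᵥ (P *ᵥ u) = u ⬝ᵥ (Rb *ᵥ u) + (F *ᵥ u) ⬝ᵥ (Qb *ᵥ (F *ᵥ u)) := by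
    rw [hP', Matrix.add_mulVec, dotProduct_add]
    congr 1
    simp only [← Matrix.mulVec_mulVec]
    rw [dot_tr Fᵀ u, transpose_transpose]
  have hu_c : u ⬝ᵥ (P *ᵥ c) = (F *ᵥ u) ⬝ᵥ z := by
    rw [hPc, hy, dot_tr Fᵀ u, transpose_transpose]
  have hc_u : c ⬝ᵥ (P *ᵥ u) = (F *ᵥ u) ⬝ᵥ z := by
    rw [dot_tr, hPT, hPc, dotProduct_comm, hy, dot_tr Fᵀ u, transpose_transpose]
  have hc_c : c ⬝ᵥ (P *ᵥ c) = y ⬝ᵥ c := by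
    rw [hPc, dotProduct_comm]
  rw [lhs2, hCv, hc, Matrix.mulVec_add, dotProduct_add, add_dotProduct, add_dotProduct,
    hPu, hu_c, hc_u, hc_c]
  ring

lemma cost_opt (hQ : Q.PosSemidef) (hR : R.PosDef) (δ : SIdx n L → ℝ) :
    costJ n m L A B Q R
      (-(((bigP n m L A B Q R)⁻¹ * (bigF n m L A B)ᵀ * bigQ n L Q * bigG n L A) *ᵥ δ)) δ =
      δ ⬝ᵥ (Cmat n m L A B Q R *ᵥ δ) := by
  rw [cost_decomp L A B Q R hQ hR]
  rw [neg_add_cancel]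
  rw [Matrix.mulVec_zero, dotProduct_zero, add_zero]

lemma cost_lb (hQ : Q.PosSemidef) (hR : R.PosDef) (u : UIdx m L → ℝ) (δ : SIdx n L → ℝ) :
    δ ⬝ᵥ (Cmat n m L A B Q R *ᵥ δ) ≤ costJ n m L A B Q R u δ := by
  rw [cost_decomp L A B Q R hQ hR u δ]
  have h := (bigP_posDef L A B Q R hQ hR).posSemidef.dotProduct_mulVec_nonneg
    (u + ((bigP n m L A B Q R)⁻¹ * (bigF n m L A B)ᵀ * bigQ n L Q * bigG n L A) *ᵥ δ)
  rw [star_trivial] at h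
  linarith

end Horizon3
end Stmt13Aux
namespace Stmt13Aux
open Matrix
set_option maxHeartbeats 1600000

section Shift
variable {n m : ℕ} (L : ℕ) (A : Matrix (Fin n) (Fin n) ℝ) (B : Matrix (Fin n) (Fin m) ℝ)
  (Q : Matrix (Fin n) (Fin n) ℝ) (R : Matrix (Fin m) (Fin m) ℝ)

lemma ZA_shift : Zshift n (L+1) * bigA n (L+1) A * dmat (Fin n) (L+2) (L+1) 1
    = dmat (Fin n) (L+2) (L+1) 1 * (Zshift n L * bigA n L A) := by
  ext p q
  have hp := p.1.isLt
  have hq := q.1.isLt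
  simp only [Zshift_eq, mul_dmat_apply, dmat_mul_apply, bigA, of_apply, Fin.ext_iff]
  split_ifs <;> first | rfl | omega

lemma ZB_shift : Zshift n (L+1) * bigB n m (L+1) B * dmat (Fin m) (L+1) L 1
    = dmat (Fin n) (L+2) (L+1) 1 * (Zshift n L * bigB n m L B) := by
  ext p q
  have hp := p.1.isLt
  have hq := q.1.isLt
  simp only [Zshift_eq, mul_dmat_apply, dmat_mul_apply, bigB, of_apply, Fin.ext_iff]
  split_ifs <;> first | rfl | omega

lemma Q_shift : (dmat (Fin n) (L+2) (L+1) 1)ᵀ * bigQ n (L+1) Q * dmat (Fin n) (L+2) (L+1) 1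
    = bigQ n L Q := by
  ext p q
  have hp := p.1.isLt
  have hq := q.1.isLt
  simp only [mul_dmat_apply, transpose_dmat_mul, bigQ, of_apply, Fin.ext_iff]
  split_ifs <;> first | rfl | omega

lemma R_shift : (dmat (Fin m) (L+1) L 1)ᵀ * bigR m (L+1) R * dmat (Fin m) (L+1) L 1
    = bigR m L R := by
  ext p q
  have hp := p.1.isLt
  have hq := q.1.isLt
  simp only [mul_dmat_apply, transpose_dmat_mul, bigR, of_apply, Fin.ext_iff]
  split_ifs <;> first | rfl | omega

end Shift
end Stmt13Aux
namespace Stmt13Aux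
open Matrix
set_option maxHeartbeats 1600000

lemma quad_conj {α β : Type*} [Fintype α] [Fintype β]
    (D : Matrix α β ℝ) (M : Matrix α α ℝ) (v : β → ℝ) :
    v ⬝ᵥ ((Dᵀ * M * D) *ᵥ v) = (D *ᵥ v) ⬝ᵥ (M *ᵥ (D *ᵥ v)) := by
  simp only [← Matrix.mulVec_mulVec]
  rw [dot_tr, transpose_transpose]

lemma submatrix_succ_eq {ι : Type*} [Fintype ι] [DecidableEq ι] {k : ℕ}
    (M : Matrix (Fin (k+1) × ι) (Fin (k+1) × ι) ℝ) :
    M.submatrix (fun c : Fin k × ι => (c.1.succ, c.2)) (fun c : Fin k × ι => (c.1.succ, c.2))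
      = (dmat ι (k+1) k 1)ᵀ * M * dmat ι (k+1) k 1 := by
  ext p q
  have hp := p.1.isLt
  have hq := q.1.isLt
  rw [submatrix_apply, mul_dmat_apply, dif_pos (show (q.1 : ℕ) + 1 < k + 1 by omega),
    transpose_dmat_mul, dif_pos (show (p.1 : ℕ) + 1 < k + 1 by omega)]
  congr 1 <;> ext <;> simp

section CostShift
variable {n m : ℕ} (L : ℕ) (A : Matrix (Fin n) (Fin n) ℝ) (B : Matrix (Fin n) (Fin m) ℝ)
  (Q : Matrix (Fin n) (Fin n) ℝ) (R : Matrix (Fin m) (Fin m) ℝ)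

lemma bigG_shift : bigG n (L+1) A * dmat (Fin n) (L+2) (L+1) 1
    = dmat (Fin n) (L+2) (L+1) 1 * bigG n L A := by
  have h1 : (1 - Zshift n (L+1) * bigA n (L+1) A) * dmat (Fin n) (L+2) (L+1) 1
      = dmat (Fin n) (L+2) (L+1) 1 * (1 - Zshift n L * bigA n L A) := by
    rw [Matrix.sub_mul, Matrix.mul_sub, Matrix.one_mul, Matrix.mul_one, ZA_shift]
  calc bigG n (L+1) A * dmat (Fin n) (L+2) (L+1) 1
      = bigG n (L+1) A * (dmat (Fin n) (L+2) (L+1) 1 *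
          ((1 - Zshift n L * bigA n L A) * bigG n L A)) := by
        rw [mul_bigG, Matrix.mul_one]
    _ = bigG n (L+1) A * (((1 - Zshift n (L+1) * bigA n (L+1) A) *
          dmat (Fin n) (L+2) (L+1) 1) * bigG n L A) := by
        rw [h1, Matrix.mul_assoc]
    _ = (bigG n (L+1) A * (1 - Zshift n (L+1) * bigA n (L+1) A)) *
          (dmat (Fin n) (L+2) (L+1) 1 * bigG n L A) := by
        simp only [Matrix.mul_assoc]
    _ = dmat (Fin n) (L+2) (L+1) 1 * bigG n L A := by
        rw [bigG_mul, Matrix.one_mul]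

lemma bigF_shift : bigF n m (L+1) A B * dmat (Fin m) (L+1) L 1
    = dmat (Fin n) (L+2) (L+1) 1 * bigF n m L A B := by
  have hF' : bigF n m (L+1) A B = bigG n (L+1) A * (Zshift n (L+1) * bigB n m (L+1) B) := rfl
  have hF : bigF n m L A B = bigG n L A * (Zshift n L * bigB n m L B) := rfl
  rw [hF', hF]
  calc bigG n (L+1) A * (Zshift n (L+1) * bigB n m (L+1) B) * dmat (Fin m) (L+1) L 1
      = bigG n (L+1) A * (Zshift n (L+1) * bigB n m (L+1) B * dmat (Fin m) (L+1) L 1) := by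
        simp only [Matrix.mul_assoc]
    _ = bigG n (L+1) A * (dmat (Fin n) (L+2) (L+1) 1 * (Zshift n L * bigB n m L B)) := by
        rw [ZB_shift]
    _ = (bigG n (L+1) A * dmat (Fin n) (L+2) (L+1) 1) * (Zshift n L * bigB n m L B) := by
        simp only [Matrix.mul_assoc]
    _ = dmat (Fin n) (L+2) (L+1) 1 * (bigG n L A * (Zshift n L * bigB n m L B)) := by
        rw [bigG_shift]; simp only [Matrix.mul_assoc]

lemma cost_shift (u : UIdx m L → ℝ) (δ : SIdx n L → ℝ) :
    costJ n m (L+1) A B Q R (dmat (Fin m) (L+1) L 1 *ᵥ u) (dmat (Fin n) (L+2) (L+1) 1 *ᵥ δ)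
      = costJ n m L A B Q R u δ := by
  have lhs_eq : costJ n m (L+1) A B Q R (dmat (Fin m) (L+1) L 1 *ᵥ u)
      (dmat (Fin n) (L+2) (L+1) 1 *ᵥ δ) =
      (bigF n m (L+1) A B *ᵥ (dmat (Fin m) (L+1) L 1 *ᵥ u) +
        bigG n (L+1) A *ᵥ (dmat (Fin n) (L+2) (L+1) 1 *ᵥ δ)) ⬝ᵥ
        (bigQ n (L+1) Q *ᵥ (bigF n m (L+1) A B *ᵥ (dmat (Fin m) (L+1) L 1 *ᵥ u) +
          bigG n (L+1) A *ᵥ (dmat (Fin n) (L+2) (L+1) 1 *ᵥ δ))) +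
        (dmat (Fin m) (L+1) L 1 *ᵥ u) ⬝ᵥ (bigR m (L+1) R *ᵥ (dmat (Fin m) (L+1) L 1 *ᵥ u)) := rfl
  have rhs_eq : costJ n m L A B Q R u δ =
      (bigF n m L A B *ᵥ u + bigG n L A *ᵥ δ) ⬝ᵥ
        (bigQ n L Q *ᵥ (bigF n m L A B *ᵥ u + bigG n L A *ᵥ δ)) +
        u ⬝ᵥ (bigR m L R *ᵥ u) := rfl
  have hx : bigF n m (L+1) A B *ᵥ (dmat (Fin m) (L+1) L 1 *ᵥ u) +
      bigG n (L+1) A *ᵥ (dmat (Fin n) (L+2) (L+1) 1 *ᵥ δ) =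
      dmat (Fin n) (L+2) (L+1) 1 *ᵥ (bigF n m L A B *ᵥ u + bigG n L A *ᵥ δ) := by
    rw [Matrix.mulVec_mulVec, Matrix.mulVec_mulVec, bigF_shift, bigG_shift,
      ← Matrix.mulVec_mulVec, ← Matrix.mulVec_mulVec, ← Matrix.mulVec_add]
  rw [lhs_eq, rhs_eq, hx, ← Q_shift L Q, ← R_shift L R, quad_conj, quad_conj]

end CostShift
end Stmt13Aux

set_option maxHeartbeats 1600000 in
/-- Claim in the proof of Theorem 1: `𝐂_{T+1}^{[2:T+1, 2:T+1]} ⪯ 𝐂_T^{[1:T, 1:T]}`. -/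
theorem stmt13 (n m T : ℕ) (hn : 0 < n) (hm : 0 < m) (hT : 1 ≤ T)
    (A : Matrix (Fin n) (Fin n) ℝ) (B : Matrix (Fin n) (Fin m) ℝ)
    (Q : Matrix (Fin n) (Fin n) ℝ) (R : Matrix (Fin m) (Fin m) ℝ)
    (hQ : Q.PosSemidef) (hR : R.PosDef) :
    ((Cmat n m T A B Q R).submatrix
        (fun c : Fin T × Fin n => ((c.1.succ : Fin (T + 1)), c.2))
        (fun c : Fin T × Fin n => ((c.1.succ : Fin (T + 1)), c.2)) -
      (Cmat n m (T + 1) A B Q R).submatrix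
        (fun c : Fin T × Fin n => ((c.1.succ.succ : Fin (T + 2)), c.2))
        (fun c : Fin T × Fin n => ((c.1.succ.succ : Fin (T + 2)), c.2))).PosSemidef := by
  open Stmt13Aux in
  refine Matrix.PosSemidef.of_dotProduct_mulVec_nonneg ?_ ?_
  · exact Matrix.IsHermitian.sub
      ((Cmat_herm T A B Q R hQ hR).submatrix _)
      ((Cmat_herm (T+1) A B Q R hQ hR).submatrix _)
  · intro y
    rw [star_trivial, Matrix.sub_mulVec, dotProduct_sub, sub_nonneg]
    have hsub2 : (Cmat n m (T + 1) A B Q R).submatrix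
        (fun c : Fin T × Fin n => ((c.1.succ.succ : Fin (T + 2)), c.2))
        (fun c : Fin T × Fin n => ((c.1.succ.succ : Fin (T + 2)), c.2)) =
        ((Cmat n m (T + 1) A B Q R).submatrix
          (fun c : Fin (T+1) × Fin n => ((c.1.succ : Fin (T + 2)), c.2))
          (fun c : Fin (T+1) × Fin n => ((c.1.succ : Fin (T + 2)), c.2))).submatrix
          (fun c : Fin T × Fin n => ((c.1.succ : Fin (T + 1)), c.2))
          (fun c : Fin T × Fin n => ((c.1.succ : Fin (T + 1)), c.2)) := by
      rw [Matrix.submatrix_submatrix]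
      rfl
    rw [hsub2, submatrix_succ_eq, submatrix_succ_eq, submatrix_succ_eq,
      quad_conj, quad_conj, quad_conj]
    set E := dmat (Fin n) (T+1) T 1 with hE
    set S1 := dmat (Fin n) (T+2) (T+1) 1 with hS1
    set δ : SIdx n T → ℝ := E *ᵥ y with hδ
    set u0 : UIdx m T → ℝ :=
      -(((bigP n m T A B Q R)⁻¹ * (bigF n m T A B)ᵀ * bigQ n T Q * bigG n T A) *ᵥ δ) with hu0
    calc (S1 *ᵥ δ) ⬝ᵥ (Cmat n m (T+1) A B Q R *ᵥ (S1 *ᵥ δ))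
        ≤ costJ n m (T+1) A B Q R (dmat (Fin m) (T+1) T 1 *ᵥ u0) (S1 *ᵥ δ) :=
          cost_lb (T+1) A B Q R hQ hR _ _
      _ = costJ n m T A B Q R u0 δ := cost_shift T A B Q R u0 δ
      _ = δ ⬝ᵥ (Cmat n m T A B Q R *ᵥ δ) := cost_opt T A B Q R hQ hR δ

end
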